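/- A linear code C : F^n → F^m (over a field F) with generator matrix M ∈ F^{n×m}, so that C(x) = xM, satisfies dist(C(x), C(y)) ≥ m - dist(x, y) + 1 for all distinct x, y ∈ F^n if and only if every square submatrix of M (indexed by any equal-size subsets of rows and columns) is nonsingular. -/

import Mathlib

open Finset

lemma aux_sum {F : Type*} [Field F] [DecidableEq F] {n m : ℕ}
    (M : Matrix (Fin n) (Fin m) F)
    {k : ℕ} (v : Fin n → F) (X : Fin k → Fin n) (hX : Function.Injective X)
    (hsupp : ∀ i, v i ≠ 0 → ∃ a, X a = i) (j : Fin m) :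
    Matrix.vecMul v M j = ∑ a, v (X a) * M (X a) j := by
  rw [Matrix.vecMul, dotProduct]
  rw [← Finset.sum_image (g := X) (s := Finset.univ)
      (f := fun i => v i * M i j) (fun a _ b _ h => hX h)]
  refine (Finset.sum_subset (Finset.subset_univ _) ?_).symm
  intro i _ hi
  rcases eq_or_ne (v i) 0 with h | h
  · rw [h, zero_mul]
  · obtain ⟨a, ha⟩ := hsupp i h
    exact absurd (Finset.mem_image.2 ⟨a, Finset.mem_univ a, ha⟩) hi

/-- A linear code `x ↦ x M` satisfies the superconcentrator-induced distance bound
`dist(C x, C y) ≥ m - dist(x,y) + 1` for all distinct `x, y` iff every square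
submatrix of the generator matrix `M` is nonsingular. -/
theorem stmt_11 {F : Type*} [Field F] [DecidableEq F] {n m : ℕ}
    (M : Matrix (Fin n) (Fin m) F) :
    (∀ x y : Fin n → F, x ≠ y →
        (m : ℤ) - hammingDist x y + 1 ≤ hammingDist (Matrix.vecMul x M) (Matrix.vecMul y M)) ↔
    (∀ (k : ℕ) (X : Fin k → Fin n) (Y : Fin k → Fin m),
        Function.Injective X → Function.Injective Y → (M.submatrix X Y).det ≠ 0) := by
  constructor
  · intro hA k X Y hX hY hdet
    obtain ⟨w, hw0, hw⟩ := Matrix.exists_vecMul_eq_zero_iff.mpr hdet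
    set v : Fin n → F := Function.extend X w 0 with hv
    have hvX : ∀ a, v (X a) = w a := by
      intro a
      rw [hv]
      exact hX.extend_apply w _ a
    have hsupp : ∀ i, v i ≠ 0 → ∃ a, X a = i := by
      intro i hi
      by_contra h
      exact hi (Function.extend_apply' w (0 : Fin n → F) i h)
    have hvne : v ≠ 0 := by
      obtain ⟨a, ha⟩ := Function.ne_iff.1 hw0
      exact Function.ne_iff.2 ⟨X a, by simpa [hvX a] using ha⟩
    have hzero : ∀ b, Matrix.vecMul v M (Y b) = 0 := by
      intro b
      rw [aux_sum M v X hX hsupp]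
      have := congrFun hw b
      simpa [Matrix.vecMul, dotProduct, Matrix.submatrix, hvX] using this
    -- bound hammingNorm v ≤ k
    have hnv : hammingNorm v ≤ k := by
      have : ({i | v i ≠ 0} : Finset (Fin n)) ⊆ Finset.univ.image X := by
        intro i hi
        simp only [Finset.mem_filter, Finset.mem_univ, true_and] at hi
        obtain ⟨a, ha⟩ := hsupp i hi
        exact Finset.mem_image.2 ⟨a, Finset.mem_univ a, ha⟩
      calc hammingNorm v ≤ (Finset.univ.image X).card := Finset.card_le_card this
        _ ≤ (Finset.univ : Finset (Fin k)).card := Finset.card_image_le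
        _ = k := by simp
    -- bound hammingNorm (vecMul v M) ≤ m - k
    have hkm : k ≤ m := by simpa using Fintype.card_le_of_injective Y hY
    have hnw : hammingNorm (Matrix.vecMul v M) + k ≤ m := by
      have hsub : ({j | Matrix.vecMul v M j ≠ 0} : Finset (Fin m)) ⊆
          Finset.univ \ Finset.univ.image Y := by
        intro j hj
        simp only [Finset.mem_filter, Finset.mem_univ, true_and] at hj
        simp only [Finset.mem_sdiff, Finset.mem_univ, true_and, Finset.mem_image]
        rintro ⟨b, -, rfl⟩
        exact hj (hzero b)
      have hcard : (Finset.univ \ Finset.univ.image Y).card = m - k := by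
        rw [Finset.card_sdiff_of_subset (Finset.subset_univ _),
          Finset.card_image_of_injective _ hY]
        simp
      have h2 := Finset.card_le_card hsub
      rw [hcard] at h2
      have h3 : hammingNorm (Matrix.vecMul v M) =
          ({j | Matrix.vecMul v M j ≠ 0} : Finset (Fin m)).card := rfl
      omega
    have := hA v 0 hvne
    rw [Matrix.zero_vecMul, hammingDist_zero_right, hammingDist_zero_right] at this
    omega
  · intro hB x y hxy
    set v : Fin n → F := x - y with hv
    have hvne : v ≠ 0 := sub_ne_zero.2 hxy
    rw [hammingDist_comm x y, hammingDist_eq_hammingNorm y x, neg_add_eq_sub y x, hammingDist_comm (Matrix.vecMul x M), hammingDist_eq_hammingNorm (Matrix.vecMul y M), neg_add_eq_sub (Matrix.vecMul y M), ← Matrix.sub_vecMul, ← hv]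
    set d := hammingNorm v with hd
    by_contra hcon
    push_neg at hcon
    -- zeros of vecMul v M number at least d
    have hnorm : hammingNorm (Matrix.vecMul v M) + d ≤ m := by
      have hdm : d ≤ m := by
        by_contra h
        push_neg at h
        have hle : hammingNorm (Matrix.vecMul v M) ≤ m :=
          (Finset.card_le_card (Finset.subset_univ _)).trans (by simp)
        omega
      omega
    have hZcard : d ≤ ({j | Matrix.vecMul v M j = 0} : Finset (Fin m)).card := by
      have := Finset.card_filter_add_card_filter_not
        (s := (Finset.univ : Finset (Fin m))) (p := fun j => Matrix.vecMul v M j = 0)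
      have hm : ({j | Matrix.vecMul v M j = 0} : Finset (Fin m)).card +
          hammingNorm (Matrix.vecMul v M) = m := by
        simpa [hammingNorm] using this
      omega
    obtain ⟨t, hts, htc⟩ := Finset.exists_subset_card_eq hZcard
    have hsc : ({i | v i ≠ 0} : Finset (Fin n)).card = d := rfl
    set X : Fin d → Fin n := fun a => (({i | v i ≠ 0} : Finset (Fin n)).orderIsoOfFin hsc a : Fin n) with hX
    set Y : Fin d → Fin m := fun b => ((t.orderIsoOfFin htc b : Fin m)) with hY
    have hXinj : Function.Injective X :=
      Subtype.val_injective.comp (OrderIso.injective _)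
    have hYinj : Function.Injective Y :=
      Subtype.val_injective.comp (OrderIso.injective _)
    have hXmem : ∀ a, v (X a) ≠ 0 := fun a =>
      (Finset.mem_filter.1 (({i | v i ≠ 0} : Finset (Fin n)).orderIsoOfFin hsc a).2).2
    have hsupp : ∀ i, v i ≠ 0 → ∃ a, X a = i := by
      intro i hi
      have hmem : i ∈ ({i | v i ≠ 0} : Finset (Fin n)) := by simpa using hi
      refine ⟨(({i | v i ≠ 0} : Finset (Fin n)).orderIsoOfFin hsc).symm ⟨i, hmem⟩, ?_⟩
      show ((({i | v i ≠ 0} : Finset (Fin n)).orderIsoOfFin hsc)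
        ((({i | v i ≠ 0} : Finset (Fin n)).orderIsoOfFin hsc).symm ⟨i, hmem⟩) : Fin n) = i
      rw [OrderIso.apply_symm_apply]
    have hzeroY : ∀ b, Matrix.vecMul v M (Y b) = 0 := by
      intro b
      have hmem : Y b ∈ t := (t.orderIsoOfFin htc b).2
      have := hts hmem
      simpa using this
    refine hB d X Y hXinj hYinj (Matrix.exists_vecMul_eq_zero_iff.mp ?_)
    refine ⟨fun a => v (X a), ?_, ?_⟩
    · obtain ⟨i, hi⟩ := Function.ne_iff.1 hvne
      obtain ⟨a, ha⟩ := hsupp i (by simpa using hi)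
      exact Function.ne_iff.2 ⟨a, by rw [ha]; simpa using hi⟩
    · funext b
      have := hzeroY b
      rw [aux_sum M v X hXinj hsupp (Y b)] at this
      simpa [Matrix.vecMul, dotProduct, Matrix.submatrix] using this
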